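/- arXiv:math/0610964 — 3 statements merged into one kernel-verified Lean document; each statement's English description precedes it below -/
import Mathlib

section
/- For real constants a ≠ 0 and b ≠ 0, the function f(u,v) = √(a² + u²) − √(b² + v²) satisfies f·(f_uu·f_vv − f_uv²) − [(1 − f_v²)·f_uu + 2·f_u·f_v·f_uv + (1 − f_u²)·f_vv] = 0 at every point (u,v) ∈ ℝ². -/
/-- Partial derivative in the first variable. -/
noncomputable def pd1 (f : ℝ → ℝ → ℝ) (u v : ℝ) : ℝ := deriv (fun t => f t v) u

/-- Partial derivative in the second variable. -/
noncomputable def pd2 (f : ℝ → ℝ → ℝ) (u v : ℝ) : ℝ := deriv (fun t => f u t) v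

/-- Equation (6.2): the PDE for graphs in the upper half-space model of S₁³
with conformal normal Gauss map, at the point (u, v). -/
noncomputable def deSitterPDE (f : ℝ → ℝ → ℝ) (u v : ℝ) : Prop :=
  f u v * (pd1 (pd1 f) u v * pd2 (pd2 f) u v - pd2 (pd1 f) u v ^ 2) -
    ((1 - pd2 f u v ^ 2) * pd1 (pd1 f) u v +
      2 * pd1 f u v * pd2 f u v * pd2 (pd1 f) u v +
      (1 - pd1 f u v ^ 2) * pd2 (pd2 f) u v) = 0

lemma hdA (a : ℝ) (ha : a ≠ 0) (t : ℝ) :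
    HasDerivAt (fun t => Real.sqrt (a ^ 2 + t ^ 2)) (t / Real.sqrt (a ^ 2 + t ^ 2)) t := by
  have hpos : 0 < a ^ 2 + t ^ 2 := by positivity
  have hs : 0 < Real.sqrt (a ^ 2 + t ^ 2) := Real.sqrt_pos.mpr hpos
  have h1 : HasDerivAt (fun t : ℝ => a ^ 2 + t ^ 2) (2 * t) t := by
    simpa using (hasDerivAt_pow 2 t).const_add (a ^ 2)
  have h2 := (Real.hasDerivAt_sqrt hpos.ne').comp t h1
  refine h2.congr_deriv ?_
  field_simp

lemma hdA2 (a : ℝ) (ha : a ≠ 0) (t : ℝ) :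
    HasDerivAt (fun t => t / Real.sqrt (a ^ 2 + t ^ 2))
      (a ^ 2 / ((a ^ 2 + t ^ 2) * Real.sqrt (a ^ 2 + t ^ 2))) t := by
  have hpos : 0 < a ^ 2 + t ^ 2 := by positivity
  have hs : 0 < Real.sqrt (a ^ 2 + t ^ 2) := Real.sqrt_pos.mpr hpos
  have hsq : Real.sqrt (a ^ 2 + t ^ 2) ^ 2 = a ^ 2 + t ^ 2 := Real.sq_sqrt hpos.le
  have h := (hasDerivAt_id t).div (hdA a ha t) hs.ne'
  refine h.congr_deriv ?_
  rw [div_eq_div_iff (by positivity) (by positivity)]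
  field_simp
  rw [hsq]; simp only [id]; ring

/-- Theorem 6.1 (minus sign): f(u,v) = √(a²+u²) − √(b²+v²) solves (6.2). -/
theorem stmt_8 (a b : ℝ) (ha : a ≠ 0) (hb : b ≠ 0) (u v : ℝ) :
    deSitterPDE (fun u v => Real.sqrt (a ^ 2 + u ^ 2) - Real.sqrt (b ^ 2 + v ^ 2)) u v := by
  have hpa : (0:ℝ) < a ^ 2 + u ^ 2 := by positivity
  have hpb : (0:ℝ) < b ^ 2 + v ^ 2 := by positivity
  have hA : 0 < Real.sqrt (a ^ 2 + u ^ 2) := Real.sqrt_pos.mpr hpa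
  have hB : 0 < Real.sqrt (b ^ 2 + v ^ 2) := Real.sqrt_pos.mpr hpb
  have hAsq : Real.sqrt (a ^ 2 + u ^ 2) ^ 2 = a ^ 2 + u ^ 2 := Real.sq_sqrt hpa.le
  have hBsq : Real.sqrt (b ^ 2 + v ^ 2) ^ 2 = b ^ 2 + v ^ 2 := Real.sq_sqrt hpb.le
  set f : ℝ → ℝ → ℝ := fun u v => Real.sqrt (a ^ 2 + u ^ 2) - Real.sqrt (b ^ 2 + v ^ 2) with hf
  have e1 : ∀ x y : ℝ, pd1 f x y = x / Real.sqrt (a ^ 2 + x ^ 2) := fun x y =>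
    ((hdA a ha x).sub_const _).deriv
  have e2 : ∀ x y : ℝ, pd2 f x y = -(y / Real.sqrt (b ^ 2 + y ^ 2)) := fun x y =>
    ((hdA b hb y).const_sub _).deriv
  have e11 : pd1 (pd1 f) u v =
      a ^ 2 / ((a ^ 2 + u ^ 2) * Real.sqrt (a ^ 2 + u ^ 2)) := by
    have h : (fun t => pd1 f t v) = fun t => t / Real.sqrt (a ^ 2 + t ^ 2) :=
      funext fun t => e1 t v
    show deriv (fun t => pd1 f t v) u = _
    rw [h]
    exact (hdA2 a ha u).deriv
  have e12 : pd2 (pd1 f) u v = 0 := by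
    have h : (fun t => pd1 f u t) = fun _ => u / Real.sqrt (a ^ 2 + u ^ 2) :=
      funext fun t => e1 u t
    show deriv (fun t => pd1 f u t) v = 0
    rw [h]
    exact deriv_const v _
  have e22 : pd2 (pd2 f) u v =
      -(b ^ 2 / ((b ^ 2 + v ^ 2) * Real.sqrt (b ^ 2 + v ^ 2))) := by
    have h : (fun t => pd2 f u t) = fun t => -(t / Real.sqrt (b ^ 2 + t ^ 2)) :=
      funext fun t => e2 u t
    show deriv (fun t => pd2 f u t) v = _
    rw [h]
    exact ((hdA2 b hb v).neg).deriv
  unfold deSitterPDE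
  rw [e11, e12, e22, e1, e2]
  have hfv : f u v = Real.sqrt (a ^ 2 + u ^ 2) - Real.sqrt (b ^ 2 + v ^ 2) := rfl
  rw [hfv]
  field_simp
  linear_combination (-a^2*b^2*Real.sqrt (b ^ 2 + v ^ 2) + (a ^ 2 + u ^ 2)*b^2*Real.sqrt (b ^ 2 + v ^ 2))*hAsq + (a^2*b^2*Real.sqrt (a ^ 2 + u ^ 2) - a^2*Real.sqrt (a ^ 2 + u ^ 2)*(b ^ 2 + v ^ 2))*hBsq
end

section
/- For real constants c₁ ≠ 0 and c₂, the function f(u,v) = (c₁c₂ + uv)/√(c₁² + v²) satisfies the PDE f·(f_uu·f_vv − f_uv²) − [(1 − f_v²)·f_uu + 2·f_u·f_v·f_uv + (1 − f_u²)·f_vv] = 0 at every point (u,v) ∈ ℝ². -/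
lemma spos (c₁ : ℝ) (hc : c₁ ≠ 0) (v : ℝ) : 0 < Real.sqrt (c₁ ^ 2 + v ^ 2) :=
  Real.sqrt_pos.mpr (by positivity)

lemma ssq (c₁ : ℝ) (hc : c₁ ≠ 0) (v : ℝ) :
    Real.sqrt (c₁ ^ 2 + v ^ 2) ^ 2 = c₁ ^ 2 + v ^ 2 :=
  Real.sq_sqrt (by positivity)

lemma hsd (c₁ : ℝ) (hc : c₁ ≠ 0) (v : ℝ) :
    HasDerivAt (fun t => Real.sqrt (c₁ ^ 2 + t ^ 2)) (v / Real.sqrt (c₁ ^ 2 + v ^ 2)) v := by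
  have h1 : HasDerivAt (fun t : ℝ => c₁ ^ 2 + t ^ 2) (2 * v) v := by
    simpa using (hasDerivAt_pow 2 v).const_add (c₁ ^ 2)
  have h2 := h1.sqrt (by positivity)
  convert h2 using 1
  ring

/-- first partial of f -/
lemma pd1f (c₁ c₂ : ℝ) (hc : c₁ ≠ 0) (u v : ℝ) :
    pd1 (fun u v => (c₁ * c₂ + u * v) / Real.sqrt (c₁ ^ 2 + v ^ 2)) u v
      = v / Real.sqrt (c₁ ^ 2 + v ^ 2) := by
  have h : HasDerivAt (fun t : ℝ => (c₁ * c₂ + t * v) / Real.sqrt (c₁ ^ 2 + v ^ 2))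
      (v / Real.sqrt (c₁ ^ 2 + v ^ 2)) u := by
    have h1 : HasDerivAt (fun t : ℝ => c₁ * c₂ + t * v) v u := by
      simpa using ((hasDerivAt_id u).mul_const v).const_add (c₁ * c₂)
    simpa using h1.div_const (Real.sqrt (c₁ ^ 2 + v ^ 2))
  exact h.deriv

/-- second partial of f -/
lemma pd2f (c₁ c₂ : ℝ) (hc : c₁ ≠ 0) (u v : ℝ) :
    pd2 (fun u v => (c₁ * c₂ + u * v) / Real.sqrt (c₁ ^ 2 + v ^ 2)) u v
      = (u * c₁ ^ 2 - c₁ * c₂ * v) / Real.sqrt (c₁ ^ 2 + v ^ 2) ^ 3 := by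
  have hs0 := (spos c₁ hc v).ne'
  have h1 : HasDerivAt (fun t : ℝ => c₁ * c₂ + u * t) u v := by
    simpa using ((hasDerivAt_id v).const_mul u).const_add (c₁ * c₂)
  have h := h1.div (hsd c₁ hc v) hs0
  simp only [Pi.div_def] at h
  have := h.deriv
  unfold pd2
  rw [this]
  have h2 := ssq c₁ hc v
  set s := Real.sqrt (c₁ ^ 2 + v ^ 2) with hs
  have key : u * s - (c₁ * c₂ + u * v) * (v / s) = (u * c₁ ^ 2 - c₁ * c₂ * v) / s := by
    rw [eq_div_iff hs0]
    field_simp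
    linear_combination u * h2
  rw [key, div_div]
  ring_nf

lemma pd1pd1 (c₁ c₂ : ℝ) (hc : c₁ ≠ 0) (u v : ℝ) :
    pd1 (pd1 (fun u v => (c₁ * c₂ + u * v) / Real.sqrt (c₁ ^ 2 + v ^ 2))) u v = 0 := by
  have heq : (fun t => pd1 (fun u v => (c₁ * c₂ + u * v) / Real.sqrt (c₁ ^ 2 + v ^ 2)) t v)
      = fun _ : ℝ => v / Real.sqrt (c₁ ^ 2 + v ^ 2) := funext fun t => pd1f c₁ c₂ hc t v
  rw [show pd1 (pd1 (fun u v => (c₁ * c₂ + u * v) / Real.sqrt (c₁ ^ 2 + v ^ 2))) u v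
      = deriv (fun t => pd1 (fun u v => (c₁ * c₂ + u * v) / Real.sqrt (c₁ ^ 2 + v ^ 2)) t v) u
      from rfl, heq, deriv_const]

lemma pd2pd1 (c₁ c₂ : ℝ) (hc : c₁ ≠ 0) (u v : ℝ) :
    pd2 (pd1 (fun u v => (c₁ * c₂ + u * v) / Real.sqrt (c₁ ^ 2 + v ^ 2))) u v
      = c₁ ^ 2 / Real.sqrt (c₁ ^ 2 + v ^ 2) ^ 3 := by
  have heq : (fun t => pd1 (fun u v => (c₁ * c₂ + u * v) / Real.sqrt (c₁ ^ 2 + v ^ 2)) u t)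
      = fun t : ℝ => t / Real.sqrt (c₁ ^ 2 + t ^ 2) := funext fun t => pd1f c₁ c₂ hc u t
  rw [show pd2 (pd1 (fun u v => (c₁ * c₂ + u * v) / Real.sqrt (c₁ ^ 2 + v ^ 2))) u v
      = deriv (fun t => pd1 (fun u v => (c₁ * c₂ + u * v) / Real.sqrt (c₁ ^ 2 + v ^ 2)) u t) v
      from rfl, heq]
  have hs0 := (spos c₁ hc v).ne'
  have h2 := ssq c₁ hc v
  have h := (hasDerivAt_id v).div (hsd c₁ hc v) hs0
  simp only [Pi.div_def, id_eq] at h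
  rw [h.deriv]
  set s := Real.sqrt (c₁ ^ 2 + v ^ 2) with hs
  have key : 1 * s - v * (v / s) = c₁ ^ 2 / s := by
    rw [eq_div_iff hs0]; field_simp; linear_combination h2
  rw [key, div_div]
  ring_nf

lemma pd2pd2 (c₁ c₂ : ℝ) (hc : c₁ ≠ 0) (u v : ℝ) :
    pd2 (pd2 (fun u v => (c₁ * c₂ + u * v) / Real.sqrt (c₁ ^ 2 + v ^ 2))) u v
      = (-(c₁ * c₂) * (c₁ ^ 2 + v ^ 2) - 3 * v * (u * c₁ ^ 2 - c₁ * c₂ * v))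
        / Real.sqrt (c₁ ^ 2 + v ^ 2) ^ 5 := by
  have heq : (fun t => pd2 (fun u v => (c₁ * c₂ + u * v) / Real.sqrt (c₁ ^ 2 + v ^ 2)) u t)
      = fun t : ℝ => (u * c₁ ^ 2 - c₁ * c₂ * t) / Real.sqrt (c₁ ^ 2 + t ^ 2) ^ 3 :=
    funext fun t => pd2f c₁ c₂ hc u t
  rw [show pd2 (pd2 (fun u v => (c₁ * c₂ + u * v) / Real.sqrt (c₁ ^ 2 + v ^ 2))) u v
      = deriv (fun t => pd2 (fun u v => (c₁ * c₂ + u * v) / Real.sqrt (c₁ ^ 2 + v ^ 2)) u t) v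
      from rfl, heq]
  have hs0 := (spos c₁ hc v).ne'
  have h2 := ssq c₁ hc v
  have hnum : HasDerivAt (fun t : ℝ => u * c₁ ^ 2 - c₁ * c₂ * t) (-(c₁ * c₂)) v := by
    simpa using (((hasDerivAt_id v).const_mul (c₁ * c₂)).const_sub (u * c₁ ^ 2))
  have hden : HasDerivAt (fun t : ℝ => Real.sqrt (c₁ ^ 2 + t ^ 2) ^ 3)
      (3 * Real.sqrt (c₁ ^ 2 + v ^ 2) ^ 2 * (v / Real.sqrt (c₁ ^ 2 + v ^ 2))) v := by
    simpa [mul_comm, Pi.pow_def] using (hsd c₁ hc v).pow 3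
  have h := hnum.div hden (by positivity)
  simp only [Pi.div_def] at h
  rw [h.deriv]
  set s := Real.sqrt (c₁ ^ 2 + v ^ 2) with hs
  rw [div_eq_div_iff (by positivity) (by positivity)]
  field_simp
  linear_combination (-c₂) * h2

/-- Corollary to Theorem 6.2: f(u,v) = (c₁c₂ + uv)/√(c₁² + v²) solves (6.2). -/
theorem stmt_9 (c₁ c₂ : ℝ) (hc : c₁ ≠ 0) (u v : ℝ) :
    deSitterPDE (fun u v => (c₁ * c₂ + u * v) / Real.sqrt (c₁ ^ 2 + v ^ 2)) u v := by
  unfold deSitterPDE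
  rw [pd1pd1 c₁ c₂ hc u v, pd2pd1 c₁ c₂ hc u v, pd2pd2 c₁ c₂ hc u v,
    pd1f c₁ c₂ hc u v, pd2f c₁ c₂ hc u v]
  have hs0 := (spos c₁ hc v).ne'
  have h2 := ssq c₁ hc v
  set s := Real.sqrt (c₁ ^ 2 + v ^ 2) with hs
  show (c₁ * c₂ + u * v) / s * _ - _ = 0
  have h3 : 1 - (v / s) ^ 2 = c₁ ^ 2 / s ^ 2 := by
    field_simp
    linear_combination h2
  rw [h3]
  field_simp
  ring
end

section
/- There is no twice continuously differentiable function f: ℝ² → ℝ with f > 0 everywhere, f_u² + f_v² > 1 everywhere, and such that f solves f·(f_uu·f_vv − f_uv²) − [(1 − f_v²)·f_uu + 2·f_u·f_v·f_uv + (1 − f_u²)·f_vv] = 0 on all of ℝ². -/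
set_option maxHeartbeats 1000000 in
theorem no_steep_positive (F : ℝ × ℝ → ℝ) (hF : ContDiff ℝ 1 F)
    (hpos : ∀ x, 0 < F x)
    (hgrad : ∀ x : ℝ × ℝ, 1 < (fderiv ℝ F x (1,0))^2 + (fderiv ℝ F x (0,1))^2) :
    False := by
  have hFd : Differentiable ℝ F := hF.differentiable one_ne_zero
  set g1 : ℝ × ℝ → ℝ := fun x => fderiv ℝ F x (1,0) with hg1
  set g2 : ℝ × ℝ → ℝ := fun x => fderiv ℝ F x (0,1) with hg2
  set S : ℝ × ℝ → ℝ := fun x => Real.sqrt (g1 x ^ 2 + g2 x ^ 2) with hSdef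
  have hS1 : ∀ x, 1 < S x := by
    intro x
    have h := hgrad x
    have h0 : (0:ℝ) ≤ g1 x ^ 2 + g2 x ^ 2 := by positivity
    have := (Real.lt_sqrt (by norm_num : (0:ℝ) ≤ 1)).2 (by simpa using h)
    simpa using this
  have hS0 : ∀ x, 0 < S x := fun x => lt_trans one_pos (hS1 x)
  have hSsq : ∀ x, S x ^ 2 = g1 x ^ 2 + g2 x ^ 2 := fun x =>
    Real.sq_sqrt (by positivity)
  have habs1 : ∀ x, |g1 x| ≤ S x := by
    intro x
    rw [← Real.sqrt_sq_eq_abs]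
    exact Real.sqrt_le_sqrt (by nlinarith [sq_nonneg (g2 x)])
  have habs2 : ∀ x, |g2 x| ≤ S x := by
    intro x
    rw [← Real.sqrt_sq_eq_abs]
    exact Real.sqrt_le_sqrt (by nlinarith [sq_nonneg (g1 x)])
  -- direction of steepest descent (unit Euclidean vector)
  set d : ℝ × ℝ → ℝ × ℝ := fun x => (g1 x / S x, g2 x / S x) with hd
  have hdnorm : ∀ x, ‖d x‖ ≤ 1 := by
    intro x
    rw [Prod.norm_def]
    have h1 : ‖g1 x / S x‖ ≤ 1 := by
      rw [Real.norm_eq_abs, abs_div, abs_of_pos (hS0 x)]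
      exact div_le_one_of_le₀ (habs1 x) (hS0 x).le
    have h2 : ‖g2 x / S x‖ ≤ 1 := by
      rw [Real.norm_eq_abs, abs_div, abs_of_pos (hS0 x)]
      exact div_le_one_of_le₀ (habs2 x) (hS0 x).le
    exact max_le h1 h2
  -- fderiv applied to a vector
  have hfd : ∀ (y : ℝ × ℝ) (w : ℝ × ℝ),
      fderiv ℝ F y w = w.1 * g1 y + w.2 * g2 y := by
    intro y w
    have h : w = w.1 • ((1:ℝ),(0:ℝ)) + w.2 • ((0:ℝ),(1:ℝ)) := by ext <;> simp
    conv_lhs => rw [h]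
    rw [map_add, map_smul, map_smul, smul_eq_mul, smul_eq_mul]
  -- derivative along a line
  have hline : ∀ (x w : ℝ × ℝ) (t : ℝ),
      HasDerivAt (fun s : ℝ => F (x + s • w))
        (w.1 * g1 (x + t • w) + w.2 * g2 (x + t • w)) t := by
    intro x w t
    have h1 : HasDerivAt (fun s : ℝ => x + s • w) w t := by
      simpa using ((hasDerivAt_id t).smul_const w).const_add x
    have h2 := ((hFd (x + t • w)).hasFDerivAt).comp_hasDerivAt t h1
    rw [hfd] at h2
    exact h2
  -- continuity of (g1, g2)
  have hGcont : Continuous (fun x => (g1 x, g2 x)) := by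
    have hc : Continuous (fun x => fderiv ℝ F x) := hF.continuous_fderiv one_ne_zero
    exact ((ContinuousLinearMap.apply ℝ ℝ ((1:ℝ),(0:ℝ))).continuous.comp hc).prodMk
      ((ContinuousLinearMap.apply ℝ ℝ ((0:ℝ),(1:ℝ))).continuous.comp hc)
  -- base point and radius
  set x₀ : ℝ × ℝ := (0, 0) with hx₀
  set R : ℝ := 2 * F x₀ + 2 with hR
  have hRpos : 0 < R := by have := hpos x₀; positivity
  -- uniform continuity on the closed ball
  have hK : IsCompact (Metric.closedBall x₀ R) := isCompact_closedBall x₀ R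
  have hUC : UniformContinuousOn (fun x => (g1 x, g2 x)) (Metric.closedBall x₀ R) :=
    hK.uniformContinuousOn_of_continuous hGcont.continuousOn
  obtain ⟨δ₀, hδ₀pos, hδ₀⟩ := (Metric.uniformContinuousOn_iff.1 hUC) (1/4) (by norm_num)
  set δ : ℝ := min (δ₀ / 2) 1 with hδdef
  have hδpos : 0 < δ := lt_min (by linarith) one_pos
  have hδ1 : δ ≤ 1 := min_le_right _ _
  have hδlt : δ < δ₀ := lt_of_le_of_lt (min_le_left _ _) (by linarith)
  -- the descent step
  have step : ∀ x : ℝ × ℝ, dist x x₀ ≤ R - 1 →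
      F (x - δ • d x) ≤ F x - δ / 2 := by
    intro x hx
    set ψ : ℝ → ℝ := fun t => F (x + t • (-(d x))) + t / 2 with hψ
    have hψderiv : ∀ t : ℝ, HasDerivAt ψ
        ((-(d x)).1 * g1 (x + t • (-(d x))) + (-(d x)).2 * g2 (x + t • (-(d x))) + 1/2) t := by
      intro t
      exact (hline x (-(d x)) t).add ((hasDerivAt_id t).div_const 2)
    have hmem : ∀ t ∈ Set.Icc (0:ℝ) δ, (x + t • (-(d x))) ∈ Metric.closedBall x₀ R ∧
        dist (x + t • (-(d x))) x < δ₀ := by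
      intro t ht
      have hdist : dist (x + t • (-(d x))) x ≤ t := by
        have : dist (x + t • (-(d x))) x = ‖t • (-(d x))‖ := by
          rw [dist_eq_norm, add_sub_cancel_left]
        rw [this, norm_smul, norm_neg, Real.norm_eq_abs, abs_of_nonneg ht.1]
        calc t * ‖d x‖ ≤ t * 1 := mul_le_mul_of_nonneg_left (hdnorm x) ht.1
          _ = t := mul_one t
      constructor
      · rw [Metric.mem_closedBall]
        calc dist (x + t • (-(d x))) x₀ ≤ dist (x + t • (-(d x))) x + dist x x₀ :=
              dist_triangle _ _ _
          _ ≤ t + (R - 1) := add_le_add hdist hx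
          _ ≤ δ + (R - 1) := by linarith [ht.2]
          _ ≤ R := by linarith
      · exact lt_of_le_of_lt (hdist.trans ht.2) hδlt
    have hxK : x ∈ Metric.closedBall x₀ R := by
      rw [Metric.mem_closedBall]; linarith
    -- the dot product bound
    have hdot : ∀ t ∈ Set.Icc (0:ℝ) δ,
        (-(d x)).1 * g1 (x + t • (-(d x))) + (-(d x)).2 * g2 (x + t • (-(d x))) + 1/2 ≤ 0 := by
      intro t ht
      obtain ⟨hyK, hyd⟩ := hmem t ht
      have hclose := hδ₀ _ hyK x hxK hyd
      set y := x + t • (-(d x)) with hy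
      have hc1 : |g1 y - g1 x| ≤ 1/4 := by
        have h1 : dist (g1 y) (g1 x) ≤ dist ((g1 y, g2 y) : ℝ × ℝ) ((g1 x, g2 x) : ℝ × ℝ) := by
          rw [Prod.dist_eq]; exact le_sup_left
        have h2 := h1.trans hclose.le
        rwa [Real.dist_eq] at h2
      have hc2 : |g2 y - g2 x| ≤ 1/4 := by
        have h1 : dist (g2 y) (g2 x) ≤ dist ((g1 y, g2 y) : ℝ × ℝ) ((g1 x, g2 x) : ℝ × ℝ) := by
          rw [Prod.dist_eq]; exact le_sup_right
        have h2 := h1.trans hclose.le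
        rwa [Real.dist_eq] at h2
      set a := g1 x; set b := g2 x; set s := S x
      have hs1 : 1 < s := hS1 x
      have hs0 : 0 < s := hS0 x
      have hssq : s ^ 2 = a ^ 2 + b ^ 2 := hSsq x
      have ha : |a| ≤ s := habs1 x
      have hb : |b| ≤ s := habs2 x
      -- dot product lower bound
      have hdotlb : a * g1 y + b * g2 y ≥ s / 2 := by
        have hac : -(s/4) ≤ a * (g1 y - a) := by
          have h1 : |a * (g1 y - a)| ≤ s * (1/4) := by
            rw [abs_mul]
            exact mul_le_mul ha hc1 (abs_nonneg _) ((abs_nonneg a).trans ha)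
          nlinarith [neg_abs_le (a * (g1 y - a))]
        have hbe : -(s/4) ≤ b * (g2 y - b) := by
          have h1 : |b * (g2 y - b)| ≤ s * (1/4) := by
            rw [abs_mul]
            exact mul_le_mul hb hc2 (abs_nonneg _) ((abs_nonneg b).trans hb)
          nlinarith [neg_abs_le (b * (g2 y - b))]
        nlinarith
      -- now the derivative bound
      have hd1 : (-(d x)).1 = -(a / s) := by simp [hd]; rfl
      have hd2 : (-(d x)).2 = -(b / s) := by simp [hd]; rfl
      rw [hd1, hd2]
      have : (a * g1 y + b * g2 y) / s ≥ 1/2 := by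
        rw [ge_iff_le, le_div_iff₀ hs0]
        linarith
      have heq : -(a / s) * g1 y + -(b / s) * g2 y = -((a * g1 y + b * g2 y) / s) := by
        field_simp; ring
      rw [heq]
      linarith
    -- antitone
    have hanti : AntitoneOn ψ (Set.Icc 0 δ) := by
      apply antitoneOn_of_deriv_nonpos (convex_Icc 0 δ)
      · exact fun t _ => ((hψderiv t).continuousAt).continuousWithinAt
      · intro t ht
        exact ((hψderiv t).differentiableAt).differentiableWithinAt
      · intro t ht
        rw [interior_Icc] at ht
        rw [(hψderiv t).deriv]
        exact hdot t ⟨ht.1.le, ht.2.le⟩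
    have h0 : (0:ℝ) ∈ Set.Icc (0:ℝ) δ := ⟨le_refl _, hδpos.le⟩
    have hδmem : δ ∈ Set.Icc (0:ℝ) δ := ⟨hδpos.le, le_refl _⟩
    have := hanti h0 hδmem hδpos.le
    simp only [hψ, zero_smul, add_zero, zero_div] at this
    have heq : x + δ • (-(d x)) = x - δ • d x := by
      rw [smul_neg]; abel
    rw [heq] at this
    linarith
  -- iterate the step
  set seq : ℕ → ℝ × ℝ := fun n => (fun y => y - δ • d y)^[n] x₀ with hseq
  have hseqsucc : ∀ n, seq (n+1) = seq n - δ • d (seq n) := by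
    intro n
    simp [hseq, Function.iterate_succ_apply']
  have hdiststep : ∀ x : ℝ × ℝ, dist (x - δ • d x) x ≤ δ := by
    intro x
    have : dist (x - δ • d x) x = ‖δ • d x‖ := by
      rw [dist_eq_norm, sub_sub_cancel_left, norm_neg]
    rw [this, norm_smul, Real.norm_eq_abs, abs_of_pos hδpos]
    calc δ * ‖d x‖ ≤ δ * 1 := mul_le_mul_of_nonneg_left (hdnorm x) hδpos.le
      _ = δ := mul_one δ
  have main : ∀ n : ℕ, dist (seq n) x₀ ≤ n * δ ∧ F (seq n) ≤ F x₀ - n * (δ / 2) := by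
    intro n
    induction n with
    | zero => simp [hseq]
    | succ n ih =>
      obtain ⟨ihd, ihF⟩ := ih
      have hFpos : 0 < F (seq n) := hpos _
      have hnd : (n:ℝ) * δ < 2 * F x₀ := by
        have hr : (n:ℝ) * δ = 2 * ((n:ℝ) * (δ / 2)) := by ring
        linarith
      have hin : dist (seq n) x₀ ≤ R - 1 := by
        rw [hR]; linarith
      have hstep := step (seq n) hin
      rw [← hseqsucc n] at hstep
      constructor
      · calc dist (seq (n+1)) x₀ ≤ dist (seq (n+1)) (seq n) + dist (seq n) x₀ :=
            dist_triangle _ _ _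
          _ ≤ δ + n * δ := by
              rw [hseqsucc n]
              exact add_le_add (hdiststep (seq n)) ihd
          _ = ((n:ℝ)+1) * δ := by ring
          _ = ((n+1 : ℕ) : ℝ) * δ := by push_cast; ring
        
      · push_cast
        calc F (seq (n+1)) ≤ F (seq n) - δ / 2 := hstep
          _ ≤ F x₀ - n * (δ/2) - δ/2 := by linarith
          _ = F x₀ - ((n:ℝ)+1) * (δ/2) := by ring
  -- contradiction
  set N : ℕ := ⌈2 * F x₀ / δ⌉₊ + 1 with hN
  have hNge : (N:ℝ) * (δ/2) > F x₀ := by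
    have h1 : (2 * F x₀ / δ) ≤ (⌈2 * F x₀ / δ⌉₊ : ℝ) := Nat.le_ceil _
    have h2 : (N:ℝ) = (⌈2 * F x₀ / δ⌉₊ : ℝ) + 1 := by push_cast [hN]; ring
    rw [h2]
    have := (div_le_iff₀ hδpos).1 h1
    nlinarith
  have := (main N).2
  have := hpos (seq N)
  linarith

theorem pd1_eq_fderiv (f : ℝ → ℝ → ℝ) (hF : Differentiable ℝ (fun p : ℝ × ℝ => f p.1 p.2))
    (u v : ℝ) : pd1 f u v = fderiv ℝ (fun p : ℝ × ℝ => f p.1 p.2) (u, v) (1, 0) := by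
  have h1 : HasDerivAt (fun t : ℝ => (t, v)) ((1 : ℝ), (0 : ℝ)) u :=
    (hasDerivAt_id u).prodMk (hasDerivAt_const u v)
  exact (((hF (u, v)).hasFDerivAt).comp_hasDerivAt u h1).deriv

theorem pd2_eq_fderiv (f : ℝ → ℝ → ℝ) (hF : Differentiable ℝ (fun p : ℝ × ℝ => f p.1 p.2))
    (u v : ℝ) : pd2 f u v = fderiv ℝ (fun p : ℝ × ℝ => f p.1 p.2) (u, v) (0, 1) := by
  have h1 : HasDerivAt (fun t : ℝ => (u, t)) ((0 : ℝ), (1 : ℝ)) v :=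
    (hasDerivAt_const v u).prodMk (hasDerivAt_id v)
  exact (((hF (u, v)).hasFDerivAt).comp_hasDerivAt v h1).deriv

/-- Nonexistence (end of Section 7): no positive entire time-like solution of (6.2). -/
theorem stmt_17 :
    ¬ ∃ f : ℝ → ℝ → ℝ, ContDiff ℝ 2 (fun p : ℝ × ℝ => f p.1 p.2) ∧
      (∀ u v : ℝ, 0 < f u v) ∧
      (∀ u v : ℝ, 1 < pd1 f u v ^ 2 + pd2 f u v ^ 2) ∧
      (∀ u v : ℝ, deSitterPDE f u v) := by
  rintro ⟨f, hC, hpos, hgrad, -⟩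
  have hF1 : ContDiff ℝ 1 (fun p : ℝ × ℝ => f p.1 p.2) :=
    hC.of_le (by norm_num)
  have hFd : Differentiable ℝ (fun p : ℝ × ℝ => f p.1 p.2) := hF1.differentiable one_ne_zero
  exact no_steep_positive (fun p : ℝ × ℝ => f p.1 p.2) hF1
    (fun x => hpos x.1 x.2)
    (fun x => by
      have h := hgrad x.1 x.2
      rwa [pd1_eq_fderiv f hFd, pd2_eq_fderiv f hFd] at h)
end
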